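/- The Picard group functor commutes with filtering direct limits of commutative rings: if R is the colimit of a filtered system of commutative rings R_i, then Pic(R) is the colimit of the groups Pic(R_i). -/

import Mathlib

open scoped TensorProduct

/-- A module is invertible (of rank one) if it is finitely generated, projective, and has
a tensor inverse. -/
def IsInvertibleModule (R : Type) [CommRing R] (M : Type) [AddCommGroup M] [Module R M] :
    Prop :=
  Module.Finite R M ∧ Module.Projective R M ∧
    ∃ (N : Type) (_ : AddCommGroup N) (_ : Module R N),
      Nonempty ((M ⊗[R] N) ≃ₗ[R] R)

open scoped Matrix Kronecker

section SplitSec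
open Matrix LinearMap

/-- A splitting of a module: a surjection from a finite free module together with a section. -/
structure Split (B : Type) [CommRing B] (ι : Type) [Fintype ι] [DecidableEq ι]
    (M : Type) [AddCommGroup M] [Module B M] where
  π : (ι → B) →ₗ[B] M
  σ : M →ₗ[B] (ι → B)
  comp_eq : π ∘ₗ σ = LinearMap.id

variable {B : Type} [CommRing B] {ι ι₁ ι₂ : Type} [Fintype ι] [DecidableEq ι]
  [Fintype ι₁] [DecidableEq ι₁] [Fintype ι₂] [DecidableEq ι₂]
  {M M₁ M₂ : Type} [AddCommGroup M] [Module B M] [AddCommGroup M₁] [Module B M₁]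
  [AddCommGroup M₂] [Module B M₂]

namespace Split

/-- The idempotent matrix attached to a splitting. -/
noncomputable def E (sp : Split B ι M) : Matrix ι ι B :=
  LinearMap.toMatrix' (sp.σ ∘ₗ sp.π)

lemma π_σ_apply (sp : Split B ι M) (m : M) : sp.π (sp.σ m) = m := by
  have := LinearMap.ext_iff.1 sp.comp_eq m
  simpa using this

lemma σ_π_eq (sp : Split B ι M) : sp.σ ∘ₗ sp.π = Matrix.mulVecLin sp.E := by
  rw [E, ← Matrix.toLin'_apply']
  exact (Matrix.toLin'_toMatrix' _).symm

lemma σ_π_apply (sp : Split B ι M) (v : ι → B) : sp.σ (sp.π v) = sp.E *ᵥ v := by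
  have := LinearMap.ext_iff.1 sp.σ_π_eq v
  simpa only [LinearMap.comp_apply, Matrix.mulVecLin_apply] using this

lemma E_idem (sp : Split B ι M) : sp.E * sp.E = sp.E := by
  have : Matrix.mulVecLin (sp.E * sp.E) = Matrix.mulVecLin sp.E := by
    rw [Matrix.mulVecLin_mul, ← sp.σ_π_eq]
    ext v
    simp only [LinearMap.comp_apply]
    rw [π_σ_apply]
  have h2 := congrArg LinearMap.toMatrix' this
  rwa [← Matrix.toLin'_apply', ← Matrix.toLin'_apply', LinearMap.toMatrix'_toLin',
    LinearMap.toMatrix'_toLin'] at h2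

/-- Build an isomorphism from matrices intertwining two splittings. -/
noncomputable def isoOfMatrices (sp₁ : Split B ι₁ M₁) (sp₂ : Split B ι₂ M₂)
    (U : Matrix ι₂ ι₁ B) (V : Matrix ι₁ ι₂ B)
    (hVU : V * U = sp₁.E) (hUV : U * V = sp₂.E) : M₁ ≃ₗ[B] M₂ := by
  refine LinearEquiv.ofLinear (sp₂.π ∘ₗ Matrix.mulVecLin U ∘ₗ sp₁.σ)
    (sp₁.π ∘ₗ Matrix.mulVecLin V ∘ₗ sp₂.σ) ?_ ?_
  · have key : U * sp₁.E * V = sp₂.E := by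
      rw [← hVU, Matrix.mul_assoc U (V * U) V, Matrix.mul_assoc V U V, ← Matrix.mul_assoc U V (U * V),
        hUV, sp₂.E_idem]
    ext m
    simp only [LinearMap.comp_apply, LinearMap.id_apply, Matrix.mulVecLin_apply]
    rw [σ_π_apply, Matrix.mulVec_mulVec, Matrix.mulVec_mulVec, key, ← σ_π_apply, π_σ_apply,
      π_σ_apply]
  · have key : V * sp₂.E * U = sp₁.E := by
      rw [← hUV, Matrix.mul_assoc V (U * V) U, Matrix.mul_assoc U V U, ← Matrix.mul_assoc V U (V * U),
        hVU, sp₁.E_idem]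
    ext m
    simp only [LinearMap.comp_apply, LinearMap.id_apply, Matrix.mulVecLin_apply]
    rw [σ_π_apply, Matrix.mulVec_mulVec, Matrix.mulVec_mulVec, key, ← σ_π_apply, π_σ_apply,
      π_σ_apply]

/-- From an isomorphism, extract intertwining matrices. -/
lemma exists_matrices (sp₁ : Split B ι₁ M₁) (sp₂ : Split B ι₂ M₂) (g : M₁ ≃ₗ[B] M₂) :
    ∃ (U : Matrix ι₂ ι₁ B) (V : Matrix ι₁ ι₂ B), V * U = sp₁.E ∧ U * V = sp₂.E := by
  refine ⟨LinearMap.toMatrix' (sp₂.σ ∘ₗ (g : M₁ →ₗ[B] M₂) ∘ₗ sp₁.π),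
    LinearMap.toMatrix' (sp₁.σ ∘ₗ (g.symm : M₂ →ₗ[B] M₁) ∘ₗ sp₂.π), ?_, ?_⟩
  · rw [← LinearMap.toMatrix'_comp, E]
    congr 1
    apply LinearMap.ext; intro v
    simp only [LinearMap.comp_apply, LinearEquiv.coe_coe]
    rw [π_σ_apply]
    simp
  · rw [← LinearMap.toMatrix'_comp, E]
    congr 1
    apply LinearMap.ext; intro v
    simp only [LinearMap.comp_apply, LinearEquiv.coe_coe]
    rw [π_σ_apply]
    simp

/-- The trivial splitting of `B` itself, over the index type `PUnit`. -/
def unit (B : Type) [CommRing B] : Split B PUnit B where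
  π := LinearMap.proj PUnit.unit
  σ := LinearMap.pi fun _ => LinearMap.id
  comp_eq := LinearMap.ext fun x => rfl

lemma E_unit : (unit B).E = 1 := by
  ext i j
  simp [E, LinearMap.toMatrix'_apply, unit, Matrix.one_apply]

end Split

/-- The range of an idempotent matrix, as a split module. -/
noncomputable def Matrix.splitRange (E : Matrix ι ι B) (h : E * E = E) :
    Split B ι ↥(LinearMap.range E.mulVecLin) where
  π := E.mulVecLin.rangeRestrict
  σ := (LinearMap.range E.mulVecLin).subtype
  comp_eq := by
    apply LinearMap.ext; intro x
    apply Subtype.ext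
    obtain ⟨v, hv⟩ := x.2
    simp only [LinearMap.comp_apply, Submodule.coe_subtype, LinearMap.id_apply,
      LinearMap.codRestrict_apply]
    rw [← hv]
    show E *ᵥ (E *ᵥ v) = E *ᵥ v
    rw [Matrix.mulVec_mulVec, h]

lemma Matrix.E_splitRange (E : Matrix ι ι B) (h : E * E = E) : (E.splitRange h).E = E := by
  have : (E.splitRange h).σ ∘ₗ (E.splitRange h).π = E.mulVecLin :=
    LinearMap.subtype_comp_codRestrict _ _ _
  rw [Split.E, this, ← Matrix.toLin'_apply', LinearMap.toMatrix'_toLin']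

end SplitSec

section PartB

variable {B : Type} [CommRing B] {ι ι₁ ι₂ : Type} [Fintype ι] [DecidableEq ι]
  [Fintype ι₁] [DecidableEq ι₁] [Fintype ι₂] [DecidableEq ι₂]
  {M M₁ M₂ : Type} [AddCommGroup M] [Module B M] [AddCommGroup M₁] [Module B M₁]
  [AddCommGroup M₂] [Module B M₂]

lemma single_eq_ite {κ : Type} [DecidableEq κ] (q : κ) :
    (Pi.single q (1 : B) : κ → B) = fun j' => if j' = q then 1 else 0 :=
  funext fun j' => by simp [Pi.single_apply]

lemma Split.E_apply (sp : Split B ι M) (i j : ι) :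
    sp.E i j = sp.σ (sp.π (Pi.single j 1)) i := by
  rw [Split.E, LinearMap.toMatrix'_apply]
  rfl

/-- The canonical equivalence `(ι₁ → B) ⊗ (ι₂ → B) ≃ (ι₁ × ι₂ → B)`. -/
noncomputable def piTensorPi (B : Type) [CommRing B] (ι₁ ι₂ : Type) [Fintype ι₁] [DecidableEq ι₁]
    [Fintype ι₂] [DecidableEq ι₂] : ((ι₁ → B) ⊗[B] (ι₂ → B)) ≃ₗ[B] (ι₁ × ι₂ → B) :=
  (TensorProduct.comm B _ _) ≪≫ₗ (TensorProduct.piScalarRight B B (ι₂ → B) ι₁) ≪≫ₗ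
    (LinearEquiv.curry B B ι₁ ι₂).symm

lemma piTensorPi_tmul (x : ι₁ → B) (y : ι₂ → B) :
    piTensorPi B ι₁ ι₂ (x ⊗ₜ[B] y) = fun p => x p.1 * y p.2 := by
  funext p
  simp [piTensorPi, LinearEquiv.curry, Function.uncurry, mul_comm]

lemma piTensorPi_symm_single (q : ι₁ × ι₂) :
    (piTensorPi B ι₁ ι₂).symm (Pi.single q 1) = Pi.single q.1 1 ⊗ₜ[B] Pi.single q.2 1 := by
  apply (piTensorPi B ι₁ ι₂).injective
  rw [LinearEquiv.apply_symm_apply, piTensorPi_tmul]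
  funext p
  rcases q with ⟨q₁, q₂⟩
  simp only [Pi.single_apply, Prod.ext_iff]
  by_cases h1 : p.1 = q₁ <;> by_cases h2 : p.2 = q₂ <;> simp [h1, h2]

/-- Tensor product of two splittings. -/
noncomputable def Split.tensor (sp₁ : Split B ι₁ M₁) (sp₂ : Split B ι₂ M₂) :
    Split B (ι₁ × ι₂) (M₁ ⊗[B] M₂) where
  π := (TensorProduct.map sp₁.π sp₂.π) ∘ₗ (piTensorPi B ι₁ ι₂).symm.toLinearMap
  σ := (piTensorPi B ι₁ ι₂).toLinearMap ∘ₗ (TensorProduct.map sp₁.σ sp₂.σ)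
  comp_eq := by
    apply LinearMap.ext; intro t
    simp only [LinearMap.comp_apply, LinearMap.id_apply, LinearEquiv.coe_coe,
      LinearEquiv.symm_apply_apply]
    induction t with
    | zero => simp
    | tmul m n => simp [Split.π_σ_apply]
    | add a b ha hb => simp [ha, hb]

lemma Split.E_tensor (sp₁ : Split B ι₁ M₁) (sp₂ : Split B ι₂ M₂) :
    (sp₁.tensor sp₂).E = Matrix.kroneckerMap (· * ·) sp₁.E sp₂.E := by
  ext p q
  rw [Split.E_apply, Matrix.kroneckerMap_apply]
  show (piTensorPi B ι₁ ι₂) (TensorProduct.map sp₁.σ sp₂.σ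
    ((TensorProduct.map sp₁.π sp₂.π) ((piTensorPi B ι₁ ι₂).symm (Pi.single q 1)))) p
    = sp₁.E p.1 q.1 * sp₂.E p.2 q.2
  rw [piTensorPi_symm_single, TensorProduct.map_tmul, TensorProduct.map_tmul, piTensorPi_tmul,
    Split.E_apply, Split.E_apply]

/-- Base change of a splitting along an algebra map. -/
noncomputable def Split.baseChange {A : Type} [CommRing A] (B : Type) [CommRing B] [Algebra A B]
    {M : Type} [AddCommGroup M] [Module A M] (sp : Split A ι M) : Split B ι (B ⊗[A] M) where
  π := (sp.π.baseChange B) ∘ₗ (TensorProduct.piScalarRight A B B ι).symm.toLinearMap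
  σ := (TensorProduct.piScalarRight A B B ι).toLinearMap ∘ₗ (sp.σ.baseChange B)
  comp_eq := by
    apply LinearMap.ext; intro t
    simp only [LinearMap.comp_apply, LinearMap.id_apply, LinearEquiv.coe_coe,
      LinearEquiv.symm_apply_apply]
    have : (sp.π.baseChange B) ∘ₗ (sp.σ.baseChange B) = LinearMap.id := by
      rw [← LinearMap.baseChange_comp, sp.comp_eq, LinearMap.baseChange_id]
    have h2 := LinearMap.ext_iff.1 this t
    simpa using h2

lemma Split.E_baseChange {A : Type} [CommRing A] (B : Type) [CommRing B] [Algebra A B]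
    {M : Type} [AddCommGroup M] [Module A M] (sp : Split A ι M) :
    (sp.baseChange B).E = sp.E.map (algebraMap A B) := by
  ext i j
  rw [Split.E_apply, Matrix.map_apply]
  show (TensorProduct.piScalarRight A B B ι) ((sp.σ.baseChange B)
    ((sp.π.baseChange B) ((TensorProduct.piScalarRight A B B ι).symm (Pi.single j 1))))
    i = algebraMap A B (sp.E i j)
  rw [TensorProduct.piScalarRight_symm_single, LinearMap.baseChange_tmul,
    LinearMap.baseChange_tmul]
  simp only [TensorProduct.piScalarRight_apply, TensorProduct.piScalarRightHom_tmul]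
  rw [Split.E_apply, Algebra.algebraMap_eq_smul_one]

/-- The dual of a splitting. -/
noncomputable def Split.dual (sp : Split B ι M) : Split B ι (Module.Dual B M) where
  π := LinearMap.mk₂ B (fun w g => ∑ i, sp.σ g i * w i)
    (fun w₁ w₂ g => by simp [mul_add, Finset.sum_add_distrib])
    (fun c w g => by simp [smul_eq_mul, Finset.mul_sum, mul_left_comm])
    (fun w g₁ g₂ => by simp [map_add, add_mul, Finset.sum_add_distrib])
    (fun c w g => by simp [smul_eq_mul, Finset.mul_sum, mul_assoc])
  σ := { toFun := fun g => fun i => g (sp.π (Pi.single i 1)),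
         map_add' := fun g h => by funext i; simp,
         map_smul' := fun c g => by funext i; simp }
  comp_eq := by
    have hsum : ∀ v : ι → B, ∑ i, v i • (Pi.single i (1:B) : ι → B) = v := by
      intro v
      have h4 : ∀ i : ι, v i • (Pi.single i (1:B) : ι → B) = Pi.single i (v i) := fun i => by
        rw [← Pi.single_smul, smul_eq_mul, mul_one]
      rw [Finset.sum_congr rfl fun i _ => h4 i, Finset.univ_sum_single]
    apply LinearMap.ext; intro g
    apply LinearMap.ext; intro m
    simp only [LinearMap.comp_apply, LinearMap.id_apply, LinearMap.mk₂_apply, LinearMap.coe_mk,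
      AddHom.coe_mk]
    have key : ∀ v : ι → B, (∑ i, v i * g (sp.π (Pi.single i 1))) = g (sp.π v) := by
      intro v
      have step : ∀ i : ι, v i * g (sp.π (Pi.single i 1))
          = (g ∘ₗ sp.π) (v i • (Pi.single i (1:B) : ι → B)) := fun i => by
        rw [LinearMap.map_smul, smul_eq_mul]; rfl
      rw [Finset.sum_congr rfl fun i _ => step i, ← map_sum, hsum v]; rfl
    rw [key (sp.σ m), Split.π_σ_apply]

lemma Split.E_dual (sp : Split B ι M) : (sp.dual).E = sp.Eᵀ := by
  ext i j
  rw [Split.E_apply, Matrix.transpose_apply]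
  show sp.dual.π (Pi.single j 1) (sp.π (Pi.single i 1)) = sp.E j i
  show (∑ k, sp.σ (sp.π (Pi.single i 1)) k * (Pi.single j (1:B) : ι → B) k) = sp.E j i
  rw [Split.E_apply]
  simp [Pi.single_apply]

end PartB

section PartC

open TensorProduct

variable {B M P : Type} [CommRing B] [AddCommGroup M] [Module B M]
  [AddCommGroup P] [Module B P]

namespace DualInv

/-- Swap the two `M`-factors of `(M ⊗ P) ⊗ (M ⊗ P)`. -/
noncomputable def sw (B M P : Type) [CommRing B] [AddCommGroup M] [Module B M]
    [AddCommGroup P] [Module B P] :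
    (M ⊗[B] P) ⊗[B] (M ⊗[B] P) ≃ₗ[B] (M ⊗[B] P) ⊗[B] (M ⊗[B] P) :=
  (TensorProduct.tensorTensorTensorComm B M P M P) ≪≫ₗ
    (TensorProduct.congr (TensorProduct.comm B M M) (LinearEquiv.refl B (P ⊗[B] P))) ≪≫ₗ
    (TensorProduct.tensorTensorTensorComm B M M P P)

lemma sw_tmul (m m' : M) (n n' : P) :
    sw B M P ((m ⊗ₜ n) ⊗ₜ (m' ⊗ₜ n')) = (m' ⊗ₜ n) ⊗ₜ (m ⊗ₜ n') := by
  simp [sw]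

variable (ψ : M ⊗[B] P ≃ₗ[B] B)

/-- Multiply the two `ψ`-values. -/
noncomputable def Phi : (M ⊗[B] P) ⊗[B] (M ⊗[B] P) →ₗ[B] B :=
  (LinearMap.mul' B B) ∘ₗ (TensorProduct.map ψ.toLinearMap ψ.toLinearMap)

lemma Phi_tmul (w w' : M ⊗[B] P) : Phi ψ (w ⊗ₜ w') = ψ w * ψ w' := by
  simp [Phi]

noncomputable def Fm : (M ⊗[B] P) ⊗[B] (M ⊗[B] P) →ₗ[B] B :=
  (Phi ψ) ∘ₗ (sw B M P).toLinearMap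

noncomputable def ee : M ⊗[B] P := ψ.symm 1

lemma ψ_ee : ψ (ee ψ) = 1 := ψ.apply_symm_apply 1

noncomputable def uu : B := Fm ψ (ee ψ ⊗ₜ ee ψ)

lemma symm_eq (a : B) : ψ.symm a = a • ee ψ := by
  rw [ee, ← _root_.map_smul, smul_eq_mul, mul_one]

lemma key (w w' : M ⊗[B] P) : Fm ψ (w ⊗ₜ w') = ψ w * ψ w' * uu ψ := by
  have h1 : w ⊗ₜ[B] w' = (ψ w * ψ w') • (ee ψ ⊗ₜ[B] ee ψ) := by
    conv_lhs => rw [← ψ.symm_apply_apply w, ← ψ.symm_apply_apply w', symm_eq, symm_eq]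
    simp only [tmul_smul, TensorProduct.smul_tmul', smul_smul]
    first
    | rfl
    | rw [mul_comm (ψ w') (ψ w)]
  rw [h1, _root_.map_smul, smul_eq_mul]
  rfl

lemma swap_id (m m' : M) (n n' : P) :
    ψ (m' ⊗ₜ n) * ψ (m ⊗ₜ n') = ψ (m ⊗ₜ n) * ψ (m' ⊗ₜ n') * uu ψ := by
  have h := key ψ (m ⊗ₜ n) (m' ⊗ₜ n')
  rw [Fm, LinearMap.comp_apply, LinearEquiv.coe_coe, sw_tmul, Phi_tmul] at h
  exact h

lemma uu_sq : uu ψ * uu ψ = 1 := by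
  have hmaps : ((uu ψ * uu ψ) • Phi ψ) = Phi ψ := by
    apply TensorProduct.ext'
    intro w w'
    induction w with
    | zero => simp
    | add a b ha hb =>
      simp only [add_tmul, map_add, LinearMap.smul_apply, smul_eq_mul] at ha hb ⊢
      rw [ha, hb]
    | tmul m n =>
      induction w' with
      | zero => simp
      | add a b ha hb =>
        simp only [tmul_add, map_add, LinearMap.smul_apply, smul_eq_mul] at ha hb ⊢
        rw [ha, hb]
      | tmul m' n' =>
        simp only [LinearMap.smul_apply, Phi_tmul, smul_eq_mul]
        have h1 := swap_id ψ m m' n n'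
        have h2 := swap_id ψ m' m n n'
        linear_combination (-(uu ψ)) * h1 - h2
  have h := LinearMap.ext_iff.1 hmaps (ee ψ ⊗ₜ ee ψ)
  simp only [LinearMap.smul_apply, smul_eq_mul, Phi_tmul, ψ_ee, mul_one] at h
  exact h

lemma kill_P (d : P) (hd : ∀ m : M, ψ (m ⊗ₜ d) = 0) : d = 0 := by
  have hmd : ∀ m : M, (m ⊗ₜ[B] d : M ⊗[B] P) = 0 := fun m => by
    apply ψ.injective; rw [hd m, map_zero]
  let S : (M ⊗[B] P) ⊗[B] P ≃ₗ[B] (M ⊗[B] P) ⊗[B] P :=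
    (TensorProduct.assoc B M P P) ≪≫ₗ
      (TensorProduct.congr (LinearEquiv.refl B M) (TensorProduct.comm B P P)) ≪≫ₗ
      (TensorProduct.assoc B M P P).symm
  have hS : ∀ (m : M) (n p : P), S ((m ⊗ₜ n) ⊗ₜ p) = (m ⊗ₜ p) ⊗ₜ n := by
    intros; simp [S]
  have hmap : (S.toLinearMap ∘ₗ (TensorProduct.mk B (M ⊗[B] P) P).flip d) = 0 := by
    apply TensorProduct.ext'
    intro m n
    simp only [LinearMap.comp_apply, LinearMap.flip_apply, TensorProduct.mk_apply,
      LinearEquiv.coe_coe, LinearMap.zero_apply, hS]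
    rw [hmd m, zero_tmul]
  have h2 := LinearMap.ext_iff.1 hmap (ee ψ)
  simp only [LinearMap.comp_apply, LinearMap.flip_apply, TensorProduct.mk_apply,
    LinearEquiv.coe_coe, LinearMap.zero_apply] at h2
  have h3 : (ee ψ ⊗ₜ[B] d : (M ⊗[B] P) ⊗[B] P) = 0 := by
    apply S.injective; simpa using h2
  have h4 := congrArg (fun t => (TensorProduct.lid B P)
    ((TensorProduct.congr ψ (LinearEquiv.refl B P)) t)) h3
  simpa [TensorProduct.congr_tmul, ψ_ee, TensorProduct.lid_tmul] using h4

lemma kill_M (d : M) (hd : ∀ p : P, ψ (d ⊗ₜ p) = 0) : d = 0 := by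
  have hmd : ∀ p : P, (d ⊗ₜ[B] p : M ⊗[B] P) = 0 := fun p => by
    apply ψ.injective; rw [hd p, map_zero]
  let S : M ⊗[B] (M ⊗[B] P) ≃ₗ[B] M ⊗[B] (M ⊗[B] P) :=
    (TensorProduct.assoc B M M P).symm ≪≫ₗ
      (TensorProduct.congr (TensorProduct.comm B M M) (LinearEquiv.refl B P)) ≪≫ₗ
      (TensorProduct.assoc B M M P)
  have hS : ∀ (m m' : M) (n : P), S (m ⊗ₜ (m' ⊗ₜ n)) = m' ⊗ₜ (m ⊗ₜ n) := by
    intros; simp [S]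
  have hmap : (S.toLinearMap ∘ₗ (TensorProduct.mk B M (M ⊗[B] P) d)) = 0 := by
    apply TensorProduct.ext'
    intro m n
    simp only [LinearMap.comp_apply, TensorProduct.mk_apply, LinearEquiv.coe_coe,
      LinearMap.zero_apply, hS]
    rw [hmd n, tmul_zero]
  have h2 := LinearMap.ext_iff.1 hmap (ee ψ)
  simp only [LinearMap.comp_apply, TensorProduct.mk_apply, LinearEquiv.coe_coe,
    LinearMap.zero_apply] at h2
  have h3 : (d ⊗ₜ[B] ee ψ : M ⊗[B] (M ⊗[B] P)) = 0 := by
    apply S.injective; simpa using h2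
  have h4 := congrArg (fun t => (TensorProduct.rid B M)
    ((TensorProduct.congr (LinearEquiv.refl B M) ψ) t)) h3
  simpa [TensorProduct.congr_tmul, ψ_ee, TensorProduct.rid_tmul] using h4

lemma idP (m : M) (n p : P) : ψ (m ⊗ₜ n) • p = (uu ψ * ψ (m ⊗ₜ p)) • n := by
  have hker : ∀ m' : M,
      ψ (m' ⊗ₜ (ψ (m ⊗ₜ n) • p - (uu ψ * ψ (m ⊗ₜ p)) • n)) = 0 := by
    intro m'
    rw [tmul_sub, map_sub, tmul_smul, tmul_smul, _root_.map_smul, _root_.map_smul,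
      smul_eq_mul, smul_eq_mul]
    have h := swap_id ψ m m' n p
    linear_combination (-(uu ψ)) * h - ψ (m ⊗ₜ[B] n) * ψ (m' ⊗ₜ[B] p) * (uu_sq ψ)
  have := kill_P ψ _ hker
  exact sub_eq_zero.mp this

lemma idM (m m' : M) (n : P) : ψ (m ⊗ₜ n) • m' = (uu ψ * ψ (m' ⊗ₜ n)) • m := by
  have hker : ∀ p : P,
      ψ ((ψ (m ⊗ₜ n) • m' - (uu ψ * ψ (m' ⊗ₜ n)) • m) ⊗ₜ p) = 0 := by
    intro p
    rw [sub_tmul, map_sub, ← TensorProduct.smul_tmul', ← TensorProduct.smul_tmul',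
      _root_.map_smul, _root_.map_smul, smul_eq_mul, smul_eq_mul]
    have h := swap_id ψ m m' n p
    linear_combination (-(uu ψ)) * h - ψ (m ⊗ₜ[B] n) * ψ (m' ⊗ₜ[B] p) * (uu_sq ψ)
  have := kill_M ψ _ hker
  exact sub_eq_zero.mp this

noncomputable def theta : P →ₗ[B] Module.Dual B M :=
  LinearMap.mk₂ B (fun p m => ψ (m ⊗ₜ p))
    (fun p q m => by show ψ (m ⊗ₜ (p + q)) = _; rw [tmul_add, map_add])
    (fun c p m => by show ψ (m ⊗ₜ (c • p)) = _; rw [tmul_smul, _root_.map_smul])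
    (fun p m₁ m₂ => by show ψ ((m₁ + m₂) ⊗ₜ p) = _; rw [add_tmul, map_add])
    (fun c p m => by
      show ψ ((c • m) ⊗ₜ p) = _; rw [← TensorProduct.smul_tmul', _root_.map_smul])

lemma theta_apply (p : P) (m : M) : theta ψ p m = ψ (m ⊗ₜ p) := rfl

noncomputable def contr (g : Module.Dual B M) : M ⊗[B] P →ₗ[B] P :=
  TensorProduct.lift (LinearMap.mk₂ B (fun m p => g m • p)
    (fun m₁ m₂ p => by show g (m₁ + m₂) • p = _; rw [map_add, add_smul])
    (fun c m p => by show g (c • m) • p = _; rw [_root_.map_smul, smul_assoc])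
    (fun m p₁ p₂ => by show g m • (p₁ + p₂) = _; rw [smul_add])
    (fun c m p => by show g m • (c • p) = _; rw [smul_comm]))

lemma contr_tmul (g : Module.Dual B M) (m : M) (p : P) :
    contr g (m ⊗ₜ p) = g m • p := rfl

noncomputable def chi : Module.Dual B M →ₗ[B] P where
  toFun g := contr g (ee ψ)
  map_add' g h := by
    show contr (g + h) (ee ψ) = contr g (ee ψ) + contr h (ee ψ)
    have hc : (contr (g + h) : M ⊗[B] P →ₗ[B] P) = contr g + contr h := by
      apply TensorProduct.ext'; intro m p
      simp only [contr_tmul, LinearMap.add_apply]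
      rw [add_smul]
    rw [hc]; rfl
  map_smul' c g := by
    show contr (c • g) (ee ψ) = c • contr g (ee ψ)
    have hc : (contr (c • g) : M ⊗[B] P →ₗ[B] P) = c • contr g := by
      apply TensorProduct.ext'; intro m p
      simp only [contr_tmul, LinearMap.smul_apply]
      rw [smul_assoc]
    rw [hc]; rfl

lemma chi_apply (g : Module.Dual B M) : chi ψ g = contr g (ee ψ) := rfl

lemma chi_theta (p : P) : chi ψ (theta ψ p) = uu ψ • p := by
  have hmap : contr (theta ψ p)
      = (LinearMap.toSpanSingleton B P p) ∘ₗ (uu ψ • ψ.toLinearMap) := by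
    apply TensorProduct.ext'; intro m n
    simp only [contr_tmul, theta_apply, LinearMap.comp_apply, LinearMap.smul_apply,
      LinearEquiv.coe_coe, LinearMap.toSpanSingleton_apply, smul_eq_mul]
    exact idP ψ m p n
  rw [chi_apply, hmap]
  simp only [LinearMap.comp_apply, LinearMap.smul_apply, LinearEquiv.coe_coe,
    LinearMap.toSpanSingleton_apply, smul_eq_mul, ψ_ee, mul_one]

lemma theta_chi (g : Module.Dual B M) : theta ψ (chi ψ g) = uu ψ • g := by
  apply LinearMap.ext; intro m
  have hmap : (ψ.toLinearMap ∘ₗ (TensorProduct.mk B M P m) ∘ₗ contr g)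
      = (uu ψ * g m) • ψ.toLinearMap := by
    apply TensorProduct.ext'; intro a b
    simp only [LinearMap.comp_apply, contr_tmul, TensorProduct.mk_apply, LinearMap.smul_apply,
      LinearEquiv.coe_coe, smul_eq_mul, tmul_smul, _root_.map_smul]
    have h5 := congrArg g (idM ψ a m b)
    rw [_root_.map_smul, _root_.map_smul, smul_eq_mul, smul_eq_mul] at h5
    linear_combination (-(uu ψ)) * h5 + (-(ψ (m ⊗ₜ[B] b) * g a)) * (uu_sq ψ)
  have h := LinearMap.ext_iff.1 hmap (ee ψ)
  simp only [LinearMap.comp_apply, TensorProduct.mk_apply, LinearEquiv.coe_coe,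
    LinearMap.smul_apply, smul_eq_mul, ψ_ee, mul_one] at h
  rw [theta_apply, chi_apply]
  simpa using h

/-- If `M ⊗ P ≃ B` then `P` is isomorphic to the dual of `M`. -/
noncomputable def dualEquivOfTensor : P ≃ₗ[B] Module.Dual B M :=
  LinearEquiv.ofLinear (theta ψ) (uu ψ • chi ψ)
    (by
      apply LinearMap.ext; intro g
      simp only [LinearMap.comp_apply, LinearMap.smul_apply, LinearMap.id_apply]
      rw [_root_.map_smul, theta_chi, smul_smul, uu_sq, one_smul])
    (by
      apply LinearMap.ext; intro p
      simp only [LinearMap.comp_apply, LinearMap.smul_apply, LinearMap.id_apply]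
      rw [chi_theta, smul_smul, uu_sq, one_smul])

end DualInv

end PartC

section PartD

variable {ι : Type} [Preorder ι] [IsDirected ι (· ≤ ·)] [Nonempty ι]
  (G : ι → Type) [∀ i, CommRing (G i)] (f : ∀ i j, i ≤ j → G i →+* G j)
  [DirectedSystem G (fun i j h => f i j h)]

lemma exists_lift_fam {κ : Type} [Fintype κ]
    (x : κ → Ring.DirectLimit G (fun i j h => f i j h)) :
    ∃ (i : ι) (y : κ → G i),
      ∀ k, Ring.DirectLimit.of G (fun i j h => f i j h) i (y k) = x k := by
  classical
  choose idx z hz using fun k => Ring.DirectLimit.exists_of (f := fun i j h => f i j h) (x k)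
  obtain ⟨i, hi⟩ := Finset.exists_le (Finset.image idx Finset.univ)
  refine ⟨i, fun k => f (idx k) i
    (hi _ (Finset.mem_image_of_mem idx (Finset.mem_univ k))) (z k), fun k => ?_⟩
  rw [Ring.DirectLimit.of_f, hz]

lemma zero_lift_fam {κ : Type} [Fintype κ] {i : ι} (y : κ → G i)
    (h : ∀ k, Ring.DirectLimit.of G (fun i j h => f i j h) i (y k) = 0) :
    ∃ (j : ι) (hij : i ≤ j), ∀ k, f i j hij (y k) = 0 := by
  classical
  choose idx hidx hzero using fun k => Ring.DirectLimit.of.zero_exact (h k)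
  obtain ⟨j, hj⟩ := Finset.exists_le (insert i (Finset.image idx Finset.univ))
  have hij : i ≤ j := hj i (Finset.mem_insert_self _ _)
  refine ⟨j, hij, fun k => ?_⟩
  have hk : idx k ≤ j := hj _ (Finset.mem_insert_of_mem
    (Finset.mem_image_of_mem idx (Finset.mem_univ k)))
  have hmm := DirectedSystem.map_map (F := G) (f := fun i j h => f i j h)
    (hidx k) hk (y k)
  have : f i j hij (y k) = f (idx k) j hk (f i (idx k) (hidx k) (y k)) := hmm.symm
  rw [this, hzero k, map_zero]

lemma eq_lift_fam {κ : Type} [Fintype κ] {i : ι} (y z : κ → G i)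
    (h : ∀ k, Ring.DirectLimit.of G (fun i j h => f i j h) i (y k)
      = Ring.DirectLimit.of G (fun i j h => f i j h) i (z k)) :
    ∃ (j : ι) (hij : i ≤ j), ∀ k, f i j hij (y k) = f i j hij (z k) := by
  have h0 : ∀ k, Ring.DirectLimit.of G (fun i j h => f i j h) i (y k - z k) = 0 := fun k => by
    rw [map_sub, h k, sub_self]
  obtain ⟨j, hij, hz⟩ := zero_lift_fam G f _ h0
  refine ⟨j, hij, fun k => ?_⟩
  have := hz k
  rw [map_sub, sub_eq_zero] at this
  exact this

lemma exists_lift_matrix {κ₁ κ₂ : Type} [Fintype κ₁] [Fintype κ₂]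
    (A : Matrix κ₁ κ₂ (Ring.DirectLimit G (fun i j h => f i j h))) :
    ∃ (i : ι) (A₀ : Matrix κ₁ κ₂ (G i)),
      A₀.map (Ring.DirectLimit.of G (fun i j h => f i j h) i) = A := by
  obtain ⟨i, y, hy⟩ := exists_lift_fam G f (fun p : κ₁ × κ₂ => A p.1 p.2)
  refine ⟨i, Matrix.of fun a b => y (a, b), ?_⟩
  ext a b
  exact hy (a, b)

lemma eq_lift_matrix {κ₁ κ₂ : Type} [Fintype κ₁] [Fintype κ₂] {i : ι}
    (A B : Matrix κ₁ κ₂ (G i))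
    (h : A.map (Ring.DirectLimit.of G (fun i j h => f i j h) i)
      = B.map (Ring.DirectLimit.of G (fun i j h => f i j h) i)) :
    ∃ (j : ι) (hij : i ≤ j), A.map (f i j hij) = B.map (f i j hij) := by
  obtain ⟨j, hij, hz⟩ := eq_lift_fam G f (fun p : κ₁ × κ₂ => A p.1 p.2)
    (fun p : κ₁ × κ₂ => B p.1 p.2) (fun p => by
      have := congrFun (congrFun h p.1) p.2
      exact this)
  refine ⟨j, hij, ?_⟩
  ext a b
  exact hz (a, b)

lemma matrix_map_map {κ₁ κ₂ : Type} {i j : ι} (hij : i ≤ j) (A : Matrix κ₁ κ₂ (G i)) :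
    (A.map (f i j hij)).map (Ring.DirectLimit.of G (fun i j h => f i j h) j)
      = A.map (Ring.DirectLimit.of G (fun i j h => f i j h) i) := by
  ext a b
  simp only [Matrix.map_apply]
  exact Ring.DirectLimit.of_f hij (A a b)

lemma matrix_push_map {κ₁ κ₂ : Type} {i j k : ι} (hij : i ≤ j) (hjk : j ≤ k)
    (A : Matrix κ₁ κ₂ (G i)) :
    (A.map (f i j hij)).map (f j k hjk) = A.map (f i k (hij.trans hjk)) := by
  ext a b
  simp only [Matrix.map_apply]
  exact DirectedSystem.map_map (F := G) (f := fun i j h => f i j h) hij hjk (A a b)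

lemma map_kronecker {κ₁ κ₂ : Type} {α β : Type} [CommRing α] [CommRing β]
    (A : Matrix κ₁ κ₁ α) (Bm : Matrix κ₂ κ₂ α) (g : α →+* β) :
    (Matrix.kroneckerMap (· * ·) A Bm).map g
      = Matrix.kroneckerMap (· * ·) (A.map g) (Bm.map g) := by
  ext a b
  simp only [Matrix.map_apply, Matrix.kroneckerMap_apply, _root_.map_mul]

lemma exists_split (B M : Type) [CommRing B] [AddCommGroup M] [Module B M]
    [Module.Finite B M] [Module.Projective B M] :
    ∃ n : ℕ, Nonempty (Split B (Fin n) M) := by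
  obtain ⟨n, π, hπ⟩ := Module.Finite.exists_fin' B M
  obtain ⟨s, hs⟩ := Module.projective_lifting_property π LinearMap.id hπ
  exact ⟨n, ⟨⟨π, s, hs⟩⟩⟩

end PartD

/-- The Picard group functor commutes with filtering direct limits of
commutative rings: for a directed system of commutative rings G i with colimit
R = Ring.DirectLimit G f, the canonical map colim Pic(G i) → Pic(R) is surjective
(every invertible R-module descends to some G i) and injective (two invertible modules
over G i that become isomorphic over R are already isomorphic over some G j, j ≥ i). -/
theorem pic_commutes_with_filtered_colimits
    (ι : Type) [Preorder ι] [IsDirected ι (· ≤ ·)] [Nonempty ι]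
    (G : ι → Type) [∀ i, CommRing (G i)] (f : ∀ i j, i ≤ j → G i →+* G j)
    [DirectedSystem G (fun i j h => f i j h)] :
    (∀ (M : Type) (_ : AddCommGroup M)
        (_ : Module (Ring.DirectLimit G fun i j h => f i j h) M),
      IsInvertibleModule (Ring.DirectLimit G fun i j h => f i j h) M →
      ∃ (i : ι) (N : Type) (_ : AddCommGroup N) (_ : Module (G i) N),
        IsInvertibleModule (G i) N ∧
        (letI := (Ring.DirectLimit.of G (fun i j h => f i j h) i).toAlgebra
         Nonempty (((Ring.DirectLimit G fun i j h => f i j h) ⊗[G i] N)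
           ≃ₗ[Ring.DirectLimit G fun i j h => f i j h] M))) ∧
    (∀ (i : ι) (N₁ N₂ : Type) (_ : AddCommGroup N₁) (_ : Module (G i) N₁)
        (_ : AddCommGroup N₂) (_ : Module (G i) N₂),
      IsInvertibleModule (G i) N₁ → IsInvertibleModule (G i) N₂ →
      (letI := (Ring.DirectLimit.of G (fun i j h => f i j h) i).toAlgebra
       Nonempty (((Ring.DirectLimit G fun i j h => f i j h) ⊗[G i] N₁)
         ≃ₗ[Ring.DirectLimit G fun i j h => f i j h]
           ((Ring.DirectLimit G fun i j h => f i j h) ⊗[G i] N₂))) →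
      ∃ (j : ι) (hij : i ≤ j),
        letI := (f i j hij).toAlgebra
        Nonempty ((G j ⊗[G i] N₁) ≃ₗ[G j] (G j ⊗[G i] N₂))) := by
  constructor
  · -- Surjectivity: every invertible module over the colimit descends.
    intro M instAdd instMod hM
    obtain ⟨hfin, hproj, P, iP1, iP2, ⟨ψ₀⟩⟩ := hM
    obtain ⟨n, ⟨spM⟩⟩ := exists_split (Ring.DirectLimit G fun i j h => f i j h) M
    let θ := DualInv.dualEquivOfTensor ψ₀
    let ψ : (M ⊗[Ring.DirectLimit G fun i j h => f i j h]
        (Module.Dual (Ring.DirectLimit G fun i j h => f i j h) M))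
        ≃ₗ[Ring.DirectLimit G fun i j h => f i j h]
        (Ring.DirectLimit G fun i j h => f i j h) :=
      (TensorProduct.congr (LinearEquiv.refl _ M) θ.symm) ≪≫ₗ ψ₀
    obtain ⟨U, V, hVU, hUV⟩ := Split.exists_matrices (spM.tensor spM.dual)
      (Split.unit (Ring.DirectLimit G fun i j h => f i j h)) ψ
    rw [Split.E_tensor, Split.E_dual] at hVU
    rw [Split.E_unit] at hUV
    obtain ⟨i₁, E₀, hE₀⟩ := exists_lift_matrix G f spM.E
    obtain ⟨i₂, U₀, hU₀⟩ := exists_lift_matrix G f U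
    obtain ⟨i₃, V₀, hV₀⟩ := exists_lift_matrix G f V
    obtain ⟨i₄, h14, h24⟩ := directed_of (· ≤ ·) i₁ i₂
    obtain ⟨i₅, h45, h35⟩ := directed_of (· ≤ ·) i₄ i₃
    set E₁ := E₀.map (f i₁ i₅ (h14.trans h45)) with hE₁def
    set U₁ := U₀.map (f i₂ i₅ (h24.trans h45)) with hU₁def
    set V₁ := V₀.map (f i₃ i₅ h35) with hV₁def
    have hE₁ : E₁.map (Ring.DirectLimit.of G (fun i j h => f i j h) i₅) = spM.E := by
      rw [hE₁def, matrix_map_map, hE₀]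
    have hU₁ : U₁.map (Ring.DirectLimit.of G (fun i j h => f i j h) i₅) = U := by
      rw [hU₁def, matrix_map_map, hU₀]
    have hV₁ : V₁.map (Ring.DirectLimit.of G (fun i j h => f i j h) i₅) = V := by
      rw [hV₁def, matrix_map_map, hV₀]
    have e1 : (E₁ * E₁).map (Ring.DirectLimit.of G (fun i j h => f i j h) i₅)
        = E₁.map (Ring.DirectLimit.of G (fun i j h => f i j h) i₅) := by
      rw [Matrix.map_mul, hE₁, spM.E_idem]
    have e2 : (V₁ * U₁).map (Ring.DirectLimit.of G (fun i j h => f i j h) i₅)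
        = (Matrix.kroneckerMap (· * ·) E₁ E₁ᵀ).map
            (Ring.DirectLimit.of G (fun i j h => f i j h) i₅) := by
      rw [Matrix.map_mul, hV₁, hU₁, hVU, map_kronecker, hE₁, Matrix.transpose_map, hE₁]
    have e3 : (U₁ * V₁).map (Ring.DirectLimit.of G (fun i j h => f i j h) i₅)
        = (1 : Matrix PUnit PUnit (G i₅)).map
            (Ring.DirectLimit.of G (fun i j h => f i j h) i₅) := by
      rw [Matrix.map_mul, hU₁, hV₁, hUV, Matrix.map_one _ (map_zero _) (map_one _)]
    obtain ⟨j₁, hj₁, q1⟩ := eq_lift_matrix G f _ _ e1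
    obtain ⟨j₂, hj₂, q2⟩ := eq_lift_matrix G f _ _ e2
    obtain ⟨j₃, hj₃, q3⟩ := eq_lift_matrix G f _ _ e3
    obtain ⟨j₄, hA, hB⟩ := directed_of (· ≤ ·) j₁ j₂
    obtain ⟨j, hC, hD⟩ := directed_of (· ≤ ·) j₄ j₃
    have hj : i₅ ≤ j := hj₁.trans (hA.trans hC)
    set E₂ := E₁.map (f i₅ j hj) with hE₂def
    set U₂ := U₁.map (f i₅ j hj) with hU₂def
    set V₂ := V₁.map (f i₅ j hj) with hV₂def
    have idem2 : E₂ * E₂ = E₂ := by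
      have q1' := congrArg (fun Z => Matrix.map Z (f j₁ j (hA.trans hC))) q1
      simp only [matrix_push_map] at q1'
      calc E₂ * E₂ = (E₁ * E₁).map (f i₅ j hj) := (Matrix.map_mul).symm
        _ = E₁.map (f i₅ j hj) := q1'
    have kr2 : V₂ * U₂ = Matrix.kroneckerMap (· * ·) E₂ E₂ᵀ := by
      have q2' := congrArg (fun Z => Matrix.map Z (f j₂ j (hB.trans hC))) q2
      simp only [matrix_push_map] at q2'
      calc V₂ * U₂ = (V₁ * U₁).map (f i₅ j hj) := (Matrix.map_mul).symm
        _ = (Matrix.kroneckerMap (· * ·) E₁ E₁ᵀ).map (f i₅ j hj) := q2'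
        _ = Matrix.kroneckerMap (· * ·) E₂ E₂ᵀ := by
            rw [map_kronecker, Matrix.transpose_map]
    have one2 : U₂ * V₂ = 1 := by
      have q3' := congrArg (fun Z => Matrix.map Z (f j₃ j hD)) q3
      simp only [matrix_push_map] at q3'
      calc U₂ * V₂ = (U₁ * V₁).map (f i₅ j hj) := (Matrix.map_mul).symm
        _ = (1 : Matrix PUnit PUnit (G i₅)).map (f i₅ j hj) := q3'
        _ = 1 := Matrix.map_one _ (map_zero _) (map_one _)
    have idemT : E₂ᵀ * E₂ᵀ = E₂ᵀ := by rw [← Matrix.transpose_mul, idem2]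
    refine ⟨j, ↥(LinearMap.range E₂.mulVecLin), inferInstance, inferInstance, ?_, ?_⟩
    · refine ⟨?_, ?_, ↥(LinearMap.range (E₂ᵀ).mulVecLin), inferInstance, inferInstance, ⟨?_⟩⟩
      · exact Module.Finite.of_surjective E₂.mulVecLin.rangeRestrict
          (LinearMap.surjective_rangeRestrict _)
      · exact Module.Projective.of_split (LinearMap.range E₂.mulVecLin).subtype
          E₂.mulVecLin.rangeRestrict (E₂.splitRange idem2).comp_eq
      · refine Split.isoOfMatrices ((E₂.splitRange idem2).tensor ((E₂ᵀ).splitRange idemT))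
          (Split.unit (G j)) U₂ V₂ ?_ ?_
        · rw [Split.E_tensor, Matrix.E_splitRange, Matrix.E_splitRange]; exact kr2
        · rw [Split.E_unit]; exact one2
    · letI := (Ring.DirectLimit.of G (fun i j h => f i j h) j).toAlgebra
      have halg : algebraMap (G j) (Ring.DirectLimit G fun i j h => f i j h)
          = Ring.DirectLimit.of G (fun i j h => f i j h) j := RingHom.algebraMap_toAlgebra _
      have hBCE : (((E₂.splitRange idem2)).baseChange
          (Ring.DirectLimit G fun i j h => f i j h)).E = spM.E := by
        rw [Split.E_baseChange, Matrix.E_splitRange, halg, hE₂def, matrix_map_map, hE₁]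
      exact ⟨Split.isoOfMatrices ((E₂.splitRange idem2).baseChange _) spM spM.E spM.E
        (by rw [hBCE]; exact spM.E_idem) spM.E_idem⟩
  · -- Injectivity: isomorphism over the colimit descends to some stage.
    intro i N₁ N₂ instA1 instM1 instA2 instM2 h1 h2 hiso
    letI := (Ring.DirectLimit.of G (fun i j h => f i j h) i).toAlgebra
    obtain ⟨g⟩ := hiso
    obtain ⟨hfin1, hproj1, -⟩ := h1
    obtain ⟨hfin2, hproj2, -⟩ := h2
    obtain ⟨n₁, ⟨sp1⟩⟩ := exists_split (G i) N₁
    obtain ⟨n₂, ⟨sp2⟩⟩ := exists_split (G i) N₂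
    have halg : algebraMap (G i) (Ring.DirectLimit G fun i j h => f i j h)
        = Ring.DirectLimit.of G (fun i j h => f i j h) i := RingHom.algebraMap_toAlgebra _
    obtain ⟨U, V, hVU, hUV⟩ := Split.exists_matrices
      (sp1.baseChange (Ring.DirectLimit G fun i j h => f i j h))
      (sp2.baseChange (Ring.DirectLimit G fun i j h => f i j h)) g
    rw [Split.E_baseChange, halg] at hVU
    rw [Split.E_baseChange, halg] at hUV
    obtain ⟨i₂, U₀, hU₀⟩ := exists_lift_matrix G f U
    obtain ⟨i₃, V₀, hV₀⟩ := exists_lift_matrix G f V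
    obtain ⟨i₄, hx, hy⟩ := directed_of (· ≤ ·) i i₂
    obtain ⟨i₅, hz, hw⟩ := directed_of (· ≤ ·) i₄ i₃
    have hii5 : i ≤ i₅ := hx.trans hz
    set U₁ := U₀.map (f i₂ i₅ (hy.trans hz)) with hU₁def
    set V₁ := V₀.map (f i₃ i₅ hw) with hV₁def
    set E₁ := sp1.E.map (f i i₅ hii5) with hE₁def
    set F₁ := sp2.E.map (f i i₅ hii5) with hF₁def
    have e1 : (V₁ * U₁).map (Ring.DirectLimit.of G (fun i j h => f i j h) i₅)
        = E₁.map (Ring.DirectLimit.of G (fun i j h => f i j h) i₅) := by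
      rw [Matrix.map_mul, hU₁def, hV₁def, hE₁def, matrix_map_map, matrix_map_map,
        matrix_map_map, hU₀, hV₀, hVU]
    have e2 : (U₁ * V₁).map (Ring.DirectLimit.of G (fun i j h => f i j h) i₅)
        = F₁.map (Ring.DirectLimit.of G (fun i j h => f i j h) i₅) := by
      rw [Matrix.map_mul, hU₁def, hV₁def, hF₁def, matrix_map_map, matrix_map_map,
        matrix_map_map, hU₀, hV₀, hUV]
    obtain ⟨j₁, hj₁, q1⟩ := eq_lift_matrix G f _ _ e1
    obtain ⟨j₂, hj₂, q2⟩ := eq_lift_matrix G f _ _ e2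
    obtain ⟨j, hα, hβ⟩ := directed_of (· ≤ ·) j₁ j₂
    have hi5j : i₅ ≤ j := hj₁.trans hα
    have hij : i ≤ j := hii5.trans hi5j
    refine ⟨j, hij, ?_⟩
    letI := (f i j hij).toAlgebra
    have halg2 : algebraMap (G i) (G j) = f i j hij := RingHom.algebraMap_toAlgebra _
    set U₂ := U₁.map (f i₅ j hi5j) with hU₂def
    set V₂ := V₁.map (f i₅ j hi5j) with hV₂def
    have kr1 : V₂ * U₂ = sp1.E.map (f i j hij) := by
      have q1' := congrArg (fun Z => Matrix.map Z (f j₁ j hα)) q1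
      simp only [matrix_push_map] at q1'
      calc V₂ * U₂ = (V₁ * U₁).map (f i₅ j hi5j) := (Matrix.map_mul).symm
        _ = E₁.map (f i₅ j hi5j) := q1'
        _ = sp1.E.map (f i j hij) := by rw [hE₁def, matrix_push_map]
    have kr2 : U₂ * V₂ = sp2.E.map (f i j hij) := by
      have q2' := congrArg (fun Z => Matrix.map Z (f j₂ j hβ)) q2
      simp only [matrix_push_map] at q2'
      calc U₂ * V₂ = (U₁ * V₁).map (f i₅ j hi5j) := (Matrix.map_mul).symm
        _ = F₁.map (f i₅ j hi5j) := q2'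
        _ = sp2.E.map (f i j hij) := by rw [hF₁def, matrix_push_map]
    exact ⟨Split.isoOfMatrices (sp1.baseChange (G j)) (sp2.baseChange (G j)) U₂ V₂
      (by rw [Split.E_baseChange, halg2]; exact kr1)
      (by rw [Split.E_baseChange, halg2]; exact kr2)⟩
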